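/- Let N be a hyperbolic lattice (signature (1,n)) and H ∈ N with H·H > 0. If A, B ∈ N satisfy A·A ≥ 0, B·B ≥ 0, A·H > 0, B·H > 0 and A·B = 0, then A·A = B·B = 0 and there exist a primitive element F ∈ N with F·F = 0, F·H > 0 and positive integers a, b such that A = aF and B = bF. -/

import Mathlib

set_option linter.deprecated false

/-- Lemma 2.1 (lattice-theoretic form): if A·B = 0 for classes of nonnegative
square on the positive side, then both are multiples of a common primitive
isotropic class. -/
theorem stmt_1 (N : Type*) [AddCommGroup N] [Module ℤ N]
    [Module.Free ℤ N] [Module.Finite ℤ N]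
    (b : N →ₗ[ℤ] N →ₗ[ℤ] ℤ) (hsymm : ∀ x y : N, b x y = b y x)
    (H : N) (hH : 0 < b H H)
    (hneg : ∀ x : N, b x H = 0 → x ≠ 0 → b x x < 0)
    (A B : N) (hA : 0 ≤ b A A) (hB : 0 ≤ b B B)
    (hAH : 0 < b A H) (hBH : 0 < b B H) (hAB : b A B = 0) :
    b A A = 0 ∧ b B B = 0 ∧
      ∃ (F : N) (a c : ℤ),
        (∀ (F' : N) (k : ℤ), F = k • F' → k = 1 ∨ k = -1) ∧
        b F F = 0 ∧ 0 < b F H ∧ 0 < a ∧ 0 < c ∧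
        A = a • F ∧ B = c • F := by
  have hBA : b B A = 0 := by rw [hsymm]; exact hAB
  -- torsion-freeness
  have hcancel : ∀ (k : ℤ) (x : N), k ≠ 0 → k • x = 0 → x = 0 := by
    intro k x hk h
    let β := Module.Free.chooseBasis ℤ N
    apply β.ext_elem
    intro i
    have hi := map_zsmul (β.coord i) k x
    rw [h, map_zero] at hi
    rw [zsmul_eq_mul, Int.cast_id] at hi
    have h0 : β.coord i x = 0 := (mul_eq_zero.mp hi.symm).resolve_left hk
    simpa [Module.Basis.coord_apply] using h0
  -- evaluation lemmas for zsmul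
  have hev1 : ∀ (n : ℤ) (x y : N), b (n • x) y = n * b x y := by
    intro n x y
    have h := map_zsmul (b.flip y) n x
    simp only [LinearMap.flip_apply] at h
    rw [h, zsmul_eq_mul, Int.cast_id]
  have hev2 : ∀ (n : ℤ) (x y : N), b x (n • y) = n * b x y := by
    intro n x y
    rw [map_zsmul (b x) n y, zsmul_eq_mul, Int.cast_id]
  -- Step 1: the vector D := (b B H) • A - (b A H) • B is zero
  have hD : (b B H) • A - (b A H) • B = 0 := by
    by_contra hne
    have h1 : b ((b B H) • A - (b A H) • B) H = 0 := by
      simp only [map_sub, LinearMap.sub_apply, hev1]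
      ring
    have h2 := hneg _ h1 hne
    have h3 : b ((b B H) • A - (b A H) • B) ((b B H) • A - (b A H) • B)
        = (b B H)^2 * b A A + (b A H)^2 * b B B := by
      simp only [map_sub, LinearMap.sub_apply, hev1, hev2, hAB, hBA]
      ring
    rw [h3] at h2
    nlinarith
  have hprop : (b B H) • A = (b A H) • B := sub_eq_zero.mp hD
  -- Step 2: A·A = 0 and B·B = 0
  have hAA : b A A = 0 := by
    have h := congrArg (fun x => b x A) hprop
    simp only [hev1, hBA] at h
    have h' : b B H * b A A = 0 := by rw [h]; ring
    exact (mul_eq_zero.mp h').resolve_left (by positivity)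
  have hBB : b B B = 0 := by
    have h := congrArg (fun x => b x B) hprop
    simp only [hev1, hAB] at h
    have h' : b A H * b B B = 0 := by rw [← h]; ring
    exact (mul_eq_zero.mp h').resolve_left (by positivity)
  refine ⟨hAA, hBB, ?_⟩
  -- Step 3: find primitive F with A = a • F
  have hAne : A ≠ 0 := by
    intro h; rw [h] at hAH; simp at hAH
  set P : ℤ → Prop := fun k => 0 < k ∧ ∃ F, A = k • F with hP
  have hbdd : ∃ m, ∀ z, P z → z ≤ m := by
    refine ⟨b A H, ?_⟩
    rintro z ⟨hz, F, hF⟩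
    have h1 : b A H = z * b F H := by rw [hF, hev1]
    have h2 : 0 < b F H := by
      rcases lt_trichotomy (b F H) 0 with h | h | h
      · nlinarith
      · rw [h, mul_zero] at h1; omega
      · exact h
    nlinarith
  have hone : P 1 := ⟨one_pos, A, (one_zsmul A).symm⟩
  obtain ⟨a, ⟨ha, F, hAF⟩, hmax⟩ := Int.exists_greatest_of_bdd hbdd ⟨1, hone⟩
  have hFne : F ≠ 0 := by
    intro h; rw [h, zsmul_zero] at hAF; exact hAne hAF
  -- primitivity of F
  have hprim : ∀ (F' : N) (k : ℤ), F = k • F' → k = 1 ∨ k = -1 := by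
    intro F' k hk
    have hkne : k ≠ 0 := by
      intro h; rw [h, zero_zsmul] at hk; exact hFne hk
    rcases lt_trichotomy k 0 with hneg' | h0 | hpos
    · right
      have hA' : A = (a * (-k)) • (-F') := by
        rw [hAF, hk, ← mul_zsmul, zsmul_neg, ← neg_zsmul]
        congr 1
        ring
      have := hmax _ ⟨by nlinarith, _, hA'⟩
      nlinarith
    · exact absurd h0 hkne
    · left
      have hA' : A = (a * k) • F' := by rw [hAF, hk, ← mul_zsmul]
      have := hmax _ ⟨by nlinarith, _, hA'⟩
      nlinarith
  -- b F H > 0 and b F F = 0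
  have hAFH : b A H = a * b F H := by rw [hAF, hev1]
  have hFH : 0 < b F H := by
    rcases lt_trichotomy (b F H) 0 with h | h | h
    · nlinarith
    · rw [h, mul_zero] at hAFH; omega
    · exact h
  have hFF : b F F = 0 := by
    have h : b A A = a * (a * b F F) := by rw [hAF, hev1, hev2]
    rw [hAA] at h
    rcases mul_eq_zero.mp h.symm with h' | h'
    · nlinarith
    · rcases mul_eq_zero.mp h' with h'' | h''
      · nlinarith
      · exact h''
  -- Step 4: B is also a multiple of F
  have hmB : (b A H) • B = (b B H * a) • F := by
    rw [← hprop, hAF, ← mul_zsmul]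
  set m : ℤ := b A H with hm
  set k : ℤ := b B H * a with hk
  have hmpos : 0 < m := hAH
  have hkpos : 0 < k := by rw [hk]; exact mul_pos hBH ha
  set g : ℤ := (Int.gcd m k : ℤ) with hg
  have hgpos : 0 < g := by
    have h0 : Int.gcd m k ≠ 0 := by
      simp [Int.gcd_eq_zero_iff]
      omega
    rw [hg]
    exact_mod_cast Nat.pos_of_ne_zero h0
  have hgm : g ∣ m := Int.gcd_dvd_left m k
  have hgk : g ∣ k := Int.gcd_dvd_right m k
  set m' : ℤ := m / g with hm'
  set k' : ℤ := k / g with hk'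
  have hmm : m = g * m' := by rw [hm', Int.mul_ediv_cancel' hgm]
  have hkk : k = g * k' := by rw [hk', Int.mul_ediv_cancel' hgk]
  have hm'pos : 0 < m' := Int.ediv_pos_of_pos_of_dvd hmpos (le_of_lt hgpos) hgm
  have hk'pos : 0 < k' := Int.ediv_pos_of_pos_of_dvd hkpos (le_of_lt hgpos) hgk
  have hcop : Int.gcd m' k' = 1 := by
    rw [hm', hk', hg]
    exact Int.gcd_div_gcd_div_gcd (by omega)
  have hm'B : m' • B = k' • F := by
    have h0 : g • (m' • B - k' • F) = 0 := by
      rw [zsmul_sub, ← mul_zsmul, ← mul_zsmul, ← hmm, ← hkk, hmB, sub_self]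
    have := hcancel g _ (by omega) h0
    exact sub_eq_zero.mp this
  -- Bezout
  obtain ⟨u, v, huv⟩ := Int.isCoprime_iff_gcd_eq_one.mpr hcop
  have hFdec : F = m' • (u • F + v • B) := by
    rw [zsmul_add, ← mul_zsmul F m' u, ← mul_zsmul B m' v]
    rw [mul_comm m' v, mul_zsmul B v m', hm'B, ← mul_zsmul F v k']
    rw [mul_comm m' u, ← add_zsmul F (u * m') (v * k'), huv, one_zsmul]
  have hm'1 : m' = 1 := by
    rcases hprim _ m' hFdec with h | h
    · exact h
    · omega
  have hBF : B = k' • F := by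
    rw [← hm'B, hm'1, one_zsmul]
  exact ⟨F, a, k', hprim, hFF, hFH, ha, hk'pos, hAF, hBF⟩
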